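/- arXiv:1207.6802 — 9 statements merged into one kernel-verified Lean document; each statement's English description precedes it below -/
import Mathlib

section
/- Let X be a dense subspace of a topological space Y, and for an open U ⊆ X define Ex_Y U = Y \ cl_Y(X \ U). If γ is a strongly point-finite family of open subsets of X, then the family {Ex_Y U : U ∈ γ} is a strongly point-finite family of open subsets of Y. -/
private lemma ex_inter {Y : Type*} [TopologicalSpace Y] (X : Set Y) {U : Set Y}
    (hUX : U ⊆ X) (hU : ∃ V : Set Y, IsOpen V ∧ U = V ∩ X) :
    (closure (X \ U))ᶜ ∩ X = U := by
  obtain ⟨V, hV, rfl⟩ := hU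
  ext x
  simp only [Set.mem_inter_iff, Set.mem_compl_iff]
  constructor
  · rintro ⟨hxc, hxX⟩
    by_contra hxU
    exact hxc (subset_closure ⟨hxX, fun h => hxU h⟩)
  · rintro ⟨hxV, hxX⟩
    refine ⟨fun hc => ?_, hxX⟩
    obtain ⟨y, hyV, hyX, hyU⟩ := mem_closure_iff.mp hc V hV hxV
    exact hyU ⟨hyV, hyX⟩

/-- If `X` is dense in `Y` and `γ` is a strongly point-finite family of open subsets
of `X`, then `{Ex_Y U : U ∈ γ}`, where `Ex_Y U = Y \ cl_Y (X \ U)`, is a strongly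
point-finite family of open subsets of `Y`. -/
theorem stmt_2 {Y : Type*} [TopologicalSpace Y] (X : Set Y) (hX : Dense X)
    (γ : Set (Set Y))
    (hopen : ∀ U ∈ γ, U ⊆ X ∧ ∃ V : Set Y, IsOpen V ∧ U = V ∩ X)
    (hspf : ∀ μ ⊆ γ, μ.Countable → μ.Infinite →
      ∃ μ' ⊆ μ, μ'.Finite ∧ ⋂₀ μ' = ∅) :
    (∀ W ∈ (fun U => (closure (X \ U))ᶜ) '' γ, IsOpen W) ∧
      ∀ μ ⊆ (fun U => (closure (X \ U))ᶜ) '' γ, μ.Countable → μ.Infinite →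
        ∃ μ' ⊆ μ, μ'.Finite ∧ ⋂₀ μ' = ∅ := by
  set f : Set Y → Set Y := fun U => (closure (X \ U))ᶜ with hf
  have hkey : ∀ U ∈ γ, f U ∩ X = U := fun U hU =>
    ex_inter X (hopen U hU).1 (hopen U hU).2
  have hinj : Set.InjOn f γ := by
    intro U hU U' hU' h
    rw [← hkey U hU, ← hkey U' hU', h]
  refine ⟨?_, ?_⟩
  · rintro W ⟨U, hU, rfl⟩
    exact isClosed_closure.isOpen_compl
  · intro μ hμγ hcnt hinf
    set ν : Set (Set Y) := γ ∩ f ⁻¹' μ with hν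
    have hνγ : ν ⊆ γ := Set.inter_subset_left
    have himg : f '' ν = μ := by
      apply Set.Subset.antisymm
      · rintro _ ⟨U, ⟨_, hUμ⟩, rfl⟩; exact hUμ
      · intro W hW
        obtain ⟨U, hUγ, rfl⟩ := hμγ hW
        exact ⟨U, ⟨hUγ, hW⟩, rfl⟩
    have hνcnt : ν.Countable := by
      have := Set.countable_of_injective_of_countable_image (hinj.mono hνγ) (himg ▸ hcnt)
      exact this
    have hνinf : ν.Infinite := by
      intro hfin
      exact hinf (himg ▸ hfin.image f)
    obtain ⟨ν', hν'ν, hν'fin, hν'empty⟩ := hspf ν hνγ hνcnt hνinf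
    refine ⟨f '' ν', himg ▸ Set.image_mono (f := f) hν'ν, hν'fin.image f, ?_⟩
    rcases ν'.eq_empty_or_nonempty with rfl | hne
    · simp only [Set.sInter_empty] at hν'empty
      have : IsEmpty Y := Set.univ_eq_empty_iff.mp hν'empty
      simp [Set.image_empty, Set.eq_empty_of_isEmpty]
    · have hopenW : IsOpen (⋂₀ (f '' ν')) :=
        Set.Finite.isOpen_sInter (hν'fin.image f)
          (by rintro _ ⟨U, _, rfl⟩; exact isClosed_closure.isOpen_compl)
      have hdisj : ⋂₀ (f '' ν') ∩ X = ∅ := by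
        have : ⋂₀ (f '' ν') ∩ X ⊆ ⋂₀ ν' := by
          intro x ⟨hx1, hx2⟩ U hU
          have := hkey U (hνγ (hν'ν hU))
          rw [← this]
          exact ⟨hx1 _ ⟨U, hU, rfl⟩, hx2⟩
        rw [hν'empty] at this
        exact Set.subset_empty_iff.mp this
      by_contra hne'
      obtain ⟨x, hx⟩ := hX.inter_open_nonempty _ hopenW
        (Set.nonempty_iff_ne_empty.mpr hne')
      exact absurd hdisj (by rw [Set.eq_empty_iff_forall_notMem]; push_neg; exact ⟨x, hx⟩)
end

section
/- Let X be a dense subspace of a topological space Y, and let n ∈ ℕ. If γ is a family of open subsets of X of order ≤ n (every n+2 members have empty intersection), then the family {Ex_Y U : U ∈ γ} of open subsets of Y also has order ≤ n. -/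
/-- If `X` is dense in `Y` and `γ` is a family of open subsets of `X` of order `≤ n`
(any `n+2` distinct members have empty intersection), then `{Ex_Y U : U ∈ γ}`,
where `Ex_Y U = Y \ cl_Y (X \ U)`, is a family of open subsets of `Y` of order `≤ n`. -/
theorem stmt_3 {Y : Type*} [TopologicalSpace Y] (X : Set Y) (hX : Dense X) (n : ℕ)
    (γ : Set (Set Y))
    (hopen : ∀ U ∈ γ, U ⊆ X ∧ ∃ V : Set Y, IsOpen V ∧ U = V ∩ X)
    (hord : ∀ s : Finset (Set Y), ↑s ⊆ γ → s.card = n + 2 →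
      ⋂₀ (s : Set (Set Y)) = ∅) :
    (∀ W ∈ (fun U => (closure (X \ U))ᶜ) '' γ, IsOpen W) ∧
      ∀ s : Finset (Set Y), ↑s ⊆ (fun U => (closure (X \ U))ᶜ) '' γ →
        s.card = n + 2 → ⋂₀ (s : Set (Set Y)) = ∅ := by
  classical
  constructor
  · rintro W ⟨U, hU, rfl⟩
    exact isClosed_closure.isOpen_compl
  · intro s hs hcard
    have hchoice : ∀ W ∈ s, ∃ U, U ∈ γ ∧ (closure (X \ U))ᶜ = W := by
      intro W hW
      obtain ⟨U, hU, hEq⟩ := hs hW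
      exact ⟨U, hU, hEq⟩
    choose f hf hfe using hchoice
    set t := s.attach.image (fun w => f w.1 w.2) with ht_def
    have ht : ↑t ⊆ γ := by
      intro U hU
      simp only [ht_def, Finset.coe_image, Set.mem_image, Finset.mem_coe,
        Finset.mem_attach, true_and, Finset.mem_image] at hU
      obtain ⟨W, rfl⟩ := hU
      exact hf _ _
    have hcardt : t.card = n + 2 := by
      rw [ht_def, Finset.card_image_of_injOn, Finset.card_attach, hcard]
      intro a _ b _ hab
      apply Subtype.ext
      rw [← hfe a.1 a.2, ← hfe b.1 b.2]
      exact congrArg (fun U => (closure (X \ U))ᶜ) hab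
    have hint := hord t ht hcardt
    by_contra h
    have hopenS : IsOpen (⋂₀ (s : Set (Set Y))) := by
      apply Set.Finite.isOpen_sInter s.finite_toSet
      intro W hW
      obtain ⟨U, hU, rfl⟩ := hs hW
      exact isClosed_closure.isOpen_compl
    obtain ⟨x, hxS, hxX⟩ := hX.inter_open_nonempty _ hopenS
      (Set.nonempty_iff_ne_empty.mpr h)
    have hxT : x ∈ ⋂₀ (t : Set (Set Y)) := by
      intro U hU
      simp only [ht_def, Finset.coe_image, Set.mem_image, Finset.mem_coe,
        Finset.mem_attach, true_and, Finset.mem_image] at hU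
      obtain ⟨W, rfl⟩ := hU
      have hxW : x ∈ (W : Set Y) := hxS W W.2
      rw [← hfe W.1 W.2] at hxW
      by_contra hxU
      exact hxW (subset_closure ⟨hxX, hxU⟩)
    rw [hint] at hxT
    exact hxT
end

section
/- In a compact topological space X, every point-finite family of closed subsets of X is strongly point-finite. -/
/-- In a compact topological space, every point-finite family of closed subsets
is strongly point-finite. -/
theorem stmt_7 {X : Type*} [TopologicalSpace X] [CompactSpace X]
    (α : Set (Set X)) (hcl : ∀ F ∈ α, IsClosed F)
    (hpf : ∀ x : X, {F ∈ α | x ∈ F}.Finite) :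
    ∀ μ ⊆ α, μ.Countable → μ.Infinite →
      ∃ μ' ⊆ μ, μ'.Finite ∧ ⋂₀ μ' = ∅ := by
  intro μ hμα _ hinf
  by_cases h : ⋂₀ μ = ∅
  · have hK : IsCompact (Set.univ : Set X) := isCompact_univ
    have hempty : (Set.univ : Set X) ∩ ⋂ F : μ, (F : Set X) = ∅ := by
      rw [Set.univ_inter, ← h, Set.sInter_eq_iInter]
    obtain ⟨t, ht⟩ := hK.elim_finite_subfamily_closed (fun F : μ => (F : Set X))
      (fun F => hcl F (hμα F.2)) hempty
    refine ⟨(fun F : μ => (F : Set X)) '' t, ?_, (t.finite_toSet.image _), ?_⟩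
    · rintro _ ⟨F, -, rfl⟩; exact F.2
    · rw [Set.univ_inter] at ht
      rw [Set.sInter_image]
      simpa using ht
  · obtain ⟨x, hx⟩ := Set.nonempty_iff_ne_empty.2 h
    exact absurd ((hpf x).subset fun F hF => ⟨hμα hF, hx F hF⟩) hinf
end

section
/- Let X be a topological space and V ⊆ X. Suppose there is a sequence (U_n)_{n≥1} of subsets with V = ⋃_n U_n, U_n ⊆ U_{n+1}, U_{2n-1} a zero-set of X and U_{2n} a cozero-set of X for all n. Then there exists a continuous function f : X → [0,1] with V = coz(f) and f⁻¹([1/2^{n-1}, 1]) = U_{2n-1} for every n ≥ 1. -/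
/-- `A` is a zero-set: `A = f ⁻¹' {0}` for some continuous `f : X → [0,1]`. -/
def IsZeroSetD {X : Type*} [TopologicalSpace X] (A : Set X) : Prop :=
  ∃ f : C(X, ℝ), (∀ x, f x ∈ Set.Icc (0 : ℝ) 1) ∧ A = f ⁻¹' {0}

/-- `A` is a cozero-set: the complement of a zero-set. -/
def IsCozSetD {X : Type*} [TopologicalSpace X] (A : Set X) : Prop :=
  ∃ f : C(X, ℝ), (∀ x, f x ∈ Set.Icc (0 : ℝ) 1) ∧ A = (f ⁻¹' {0})ᶜ

/-- If `V = ⋃_{n ≥ 1} U n` with `U n ⊆ U (n+1)`, the odd-indexed `U (2n-1)` zero-sets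
and the even-indexed `U (2n)` cozero-sets, then there is a continuous `f : X → [0,1]`
with `V = coz f` and `f ⁻¹ [1/2^(n-1), 1] = U (2n-1)` for every `n ≥ 1`. -/
theorem stmt_9 {X : Type*} [TopologicalSpace X] (V : Set X) (U : ℕ → Set X)
    (hV : V = ⋃ n, ⋃ (_ : 1 ≤ n), U n)
    (hmono : ∀ n, 1 ≤ n → U n ⊆ U (n + 1))
    (hodd : ∀ n, 1 ≤ n → IsZeroSetD (U (2 * n - 1)))
    (heven : ∀ n, 1 ≤ n → IsCozSetD (U (2 * n))) :
    ∃ f : C(X, ℝ), (∀ x, f x ∈ Set.Icc (0 : ℝ) 1) ∧ V = (f ⁻¹' {0})ᶜ ∧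
      ∀ n : ℕ, 1 ≤ n → f ⁻¹' Set.Icc (1 / 2 ^ (n - 1) : ℝ) 1 = U (2 * n - 1) := by
  classical
  choose φ hφ01 hφZ using fun m : ℕ => hodd (m + 1) (Nat.le_add_left 1 m)
  choose ψ hψ01 hψZ using fun m : ℕ => heven (m + 1) (Nat.le_add_left 1 m)
  -- monotonicity chain
  have hsub : ∀ a b : ℕ, 1 ≤ a → a ≤ b → U a ⊆ U b := by
    intro a b ha hab
    induction hab with
    | refl => exact subset_rfl
    | @step b hb ih => exact ih.trans (hmono b (le_trans ha hb))
  have hφZ' : ∀ m, U (2 * m + 1) = φ m ⁻¹' {0} := by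
    intro m
    have : 2 * (m + 1) - 1 = 2 * m + 1 := by omega
    rw [← this]; exact hφZ m
  have hψZ' : ∀ m, U (2 * m + 2) = (ψ m ⁻¹' {0})ᶜ := by
    intro m
    have : 2 * (m + 1) = 2 * m + 2 := by omega
    rw [← this]; exact hψZ m
  have hφmem : ∀ m x, x ∈ U (2 * m + 1) ↔ φ m x = 0 := by
    intro m x; rw [hφZ' m]; simp
  have hψmem : ∀ m x, x ∈ U (2 * m + 2) ↔ ψ m x ≠ 0 := by
    intro m x; rw [hψZ' m]; simp
  -- the denominator is positive
  have hden : ∀ m x, 0 < φ m x + ψ m x := by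
    intro m x
    rcases eq_or_lt_of_le (hψ01 m x).1 with h | h
    · have hx2 : x ∉ U (2 * m + 2) := fun hx => (hψmem m x).1 hx h.symm
      have hx1 : x ∉ U (2 * m + 1) := fun h1 => hx2 (hmono (2 * m + 1) (by omega) h1)
      have hφne : φ m x ≠ 0 := fun h0 => hx1 ((hφmem m x).2 h0)
      have := lt_of_le_of_ne (hφ01 m x).1 (Ne.symm hφne)
      linarith
    · linarith [(hφ01 m x).1]
  set g : ℕ → X → ℝ := fun m x => ψ m x / (φ m x + ψ m x) with hgdef
  have hgcont : ∀ m, Continuous (g m) := fun m =>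
    (ψ m).continuous.div ((φ m).continuous.add (ψ m).continuous) fun x => (hden m x).ne'
  have hg0 : ∀ m x, 0 ≤ g m x := fun m x => div_nonneg (hψ01 m x).1 (hden m x).le
  have hg1 : ∀ m x, g m x ≤ 1 := fun m x =>
    (div_le_one (hden m x)).2 (by linarith [(hφ01 m x).1])
  have hg_eq_one : ∀ m x, g m x = 1 ↔ x ∈ U (2 * m + 1) := by
    intro m x
    rw [hφmem, hgdef]
    simp only
    rw [div_eq_one_iff_eq (hden m x).ne']
    constructor
    · intro h; linarith
    · intro h; linarith
  have hg_eq_zero : ∀ m x, g m x = 0 ↔ x ∉ U (2 * m + 2) := by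
    intro m x
    rw [hψmem, hgdef]
    simp only
    rw [div_eq_zero_iff]
    simp [(hden m x).ne']
  set a : ℕ → X → ℝ := fun m x => (1 / 2 : ℝ) ^ (m + 1) * g m x with hadef
  have hpow : ∀ m : ℕ, (0 : ℝ) < (1 / 2 : ℝ) ^ (m + 1) := fun m => by positivity
  have ha0 : ∀ m x, 0 ≤ a m x := fun m x => mul_nonneg (hpow m).le (hg0 m x)
  have hale : ∀ m x, a m x ≤ (1 / 2 : ℝ) ^ (m + 1) := fun m x => by
    calc a m x ≤ (1 / 2 : ℝ) ^ (m + 1) * 1 :=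
          mul_le_mul_of_nonneg_left (hg1 m x) (hpow m).le
      _ = _ := mul_one _
  have hsumgeo : Summable (fun m : ℕ => (1 / 2 : ℝ) ^ (m + 1)) := by
    simp only [pow_succ]
    exact (summable_geometric_of_lt_one (by norm_num) (by norm_num)).mul_right _
  have hsuma : ∀ x, Summable (fun m => a m x) := fun x =>
    Summable.of_nonneg_of_le (fun m => ha0 m x) (fun m => hale m x) hsumgeo
  -- geometric tail sums
  have hS : ∀ k : ℕ, ∑' m : ℕ, (1 / 2 : ℝ) ^ (m + k + 1) = (1 / 2 : ℝ) ^ k := by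
    intro k
    have h2 : ∑' m : ℕ, (1 / 2 : ℝ) ^ m = 2 := by
      rw [tsum_geometric_of_lt_one (by norm_num) (by norm_num)]; norm_num
    calc ∑' m : ℕ, (1 / 2 : ℝ) ^ (m + k + 1)
        = ∑' m : ℕ, (1 / 2 : ℝ) ^ m * (1 / 2 : ℝ) ^ (k + 1) := by
          refine tsum_congr fun m => ?_
          rw [← pow_add, Nat.add_assoc]
      _ = 2 * (1 / 2 : ℝ) ^ (k + 1) := by rw [tsum_mul_right, h2]
      _ = (1 / 2 : ℝ) ^ k := by rw [pow_succ]; ring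
  have hcsummable : ∀ k : ℕ,
      Summable (fun m : ℕ => if m < k then 0 else (1 / 2 : ℝ) ^ (m + 1)) := by
    intro k
    refine Summable.of_nonneg_of_le (fun m => ?_) (fun m => ?_) hsumgeo
    · by_cases hm : m < k
      · rw [if_pos hm]
      · rw [if_neg hm]; positivity
    · by_cases hm : m < k
      · rw [if_pos hm]; positivity
      · rw [if_neg hm]
  have hc : ∀ k : ℕ, ∑' m : ℕ, (if m < k then 0 else (1 / 2 : ℝ) ^ (m + 1))
      = (1 / 2 : ℝ) ^ k := by
    intro k
    rw [← Summable.sum_add_tsum_nat_add k (hcsummable k)]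
    have h1 : ∑ i ∈ Finset.range k,
        (if i < k then (0 : ℝ) else (1 / 2 : ℝ) ^ (i + 1)) = 0 :=
      Finset.sum_eq_zero fun i hi => if_pos (Finset.mem_range.1 hi)
    have h2 : ∑' i : ℕ, (if i + k < k then (0 : ℝ) else (1 / 2 : ℝ) ^ (i + k + 1))
        = (1 / 2 : ℝ) ^ k := by
      rw [tsum_congr fun i => if_neg (by omega), hS k]
    rw [h1, h2, zero_add]
  have hf0 : ∀ x, 0 ≤ ∑' m, a m x := fun x => tsum_nonneg fun m => ha0 m x
  have hone : ∑' m : ℕ, (1 / 2 : ℝ) ^ (m + 1) = 1 := by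
    have := hS 0
    simpa using this
  have hf1 : ∀ x, ∑' m, a m x ≤ 1 := by
    intro x
    have := Summable.tsum_le_tsum (fun m => hale m x) (hsuma x) hsumgeo
    rw [hone] at this
    exact this
  have hcont : Continuous fun x => ∑' m, a m x := by
    refine continuous_tsum (fun m => ?_) hsumgeo (fun m x => ?_)
    · exact continuous_const.mul (hgcont m)
    · rw [Real.norm_eq_abs, abs_of_nonneg (ha0 m x)]
      exact hale m x
  refine ⟨⟨fun x => ∑' m, a m x, hcont⟩, fun x => ⟨hf0 x, hf1 x⟩, ?_, ?_⟩
  · -- V = cozero set of f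
    ext x
    simp only [Set.mem_compl_iff, Set.mem_preimage, Set.mem_singleton_iff,
      ContinuousMap.coe_mk]
    constructor
    · intro hxV h0
      rw [hV] at hxV
      simp only [Set.mem_iUnion] at hxV
      obtain ⟨n, hn, hx⟩ := hxV
      have hx2 : x ∈ U (2 * (n - 1) + 2) := hsub n _ hn (by omega) hx
      have hgpos : 0 < g (n - 1) x :=
        lt_of_le_of_ne (hg0 _ x) (Ne.symm fun h => (hg_eq_zero _ x).1 h hx2)
      have hapos : 0 < a (n - 1) x := mul_pos (hpow _) hgpos
      have hle : a (n - 1) x ≤ ∑' m, a m x := Summable.le_tsum (hsuma x) _ fun m _ => ha0 m x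
      linarith
    · intro hne
      by_contra hxV
      apply hne
      have hz : ∀ m, a m x = 0 := by
        intro m
        have hxU : x ∉ U (2 * m + 2) := by
          intro hm
          have hxV' : x ∈ V := by
            rw [hV]
            simp only [Set.mem_iUnion]
            exact ⟨2 * m + 2, by omega, hm⟩
          exact hxV hxV'
        have hgz := (hg_eq_zero m x).2 hxU
        simp only [hadef, hgz, mul_zero]
      rw [tsum_congr hz]
      exact tsum_zero
  · -- level sets
    intro n hn
    obtain ⟨k, rfl⟩ : ∃ k, n = k + 1 := ⟨n - 1, by omega⟩
    have e1 : 2 * (k + 1) - 1 = 2 * k + 1 := by omega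
    have e2 : (k + 1) - 1 = k := by omega
    rw [e1, e2]
    have h12 : (1 : ℝ) / 2 ^ k = (1 / 2 : ℝ) ^ k := by rw [div_pow, one_pow]
    ext x
    simp only [Set.mem_preimage, Set.mem_Icc, ContinuousMap.coe_mk]
    constructor
    · rintro ⟨h1, -⟩
      by_contra hx
      have hlt : ∑' m, a m x
          < ∑' m : ℕ, (if m < k then 0 else (1 / 2 : ℝ) ^ (m + 1)) := by
        refine Summable.tsum_lt_tsum (i := k) (fun m => ?_) ?_ (hsuma x) (hcsummable k)
        · by_cases hm : m < k
          · rw [if_pos hm]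
            have hxU : x ∉ U (2 * m + 2) := fun hmem =>
              hx (hsub (2 * m + 2) (2 * k + 1) (by omega) (by omega) hmem)
            have hgz := (hg_eq_zero m x).2 hxU
            simp only [hadef, hgz, mul_zero, le_refl]
          · rw [if_neg hm]; exact hale m x
        · rw [if_neg (lt_irrefl k)]
          have hglt : g k x < 1 :=
            lt_of_le_of_ne (hg1 k x) fun h => hx ((hg_eq_one k x).1 h)
          calc a k x = (1 / 2 : ℝ) ^ (k + 1) * g k x := rfl
            _ < (1 / 2 : ℝ) ^ (k + 1) * 1 := by
                exact mul_lt_mul_of_pos_left hglt (hpow k)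
            _ = (1 / 2 : ℝ) ^ (k + 1) := mul_one _
      rw [hc k] at hlt
      rw [h12] at h1
      linarith
    · intro hx
      refine ⟨?_, hf1 x⟩
      rw [h12]
      have hle : ∑' m : ℕ, (if m < k then 0 else (1 / 2 : ℝ) ^ (m + 1))
          ≤ ∑' m, a m x := by
        refine Summable.tsum_le_tsum (fun m => ?_) (hcsummable k) (hsuma x)
        by_cases hm : m < k
        · rw [if_pos hm]; exact ha0 m x
        · rw [if_neg hm]
          have hxm : x ∈ U (2 * m + 1) :=
            hsub (2 * k + 1) (2 * m + 1) (by omega) (by omega) hx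
          have hgo := (hg_eq_one m x).2 hxm
          simp only [hadef, hgo, mul_one, le_refl]
      rw [hc k] at hle
      exact hle
end

section
/- A subset V of a topological space X is a cozero-set if and only if V is U-representable, i.e., there exists a sequence (U_n)_{n≥1} with V = ⋃_n U_n, U_n ⊆ U_{n+1}, U_{2n-1} a zero-set and U_{2n} a cozero-set for every n. -/
lemma aux_zero10 {X : Type*} [TopologicalSpace X] (f : C(X,ℝ))
    (hf : ∀ x, f x ∈ Set.Icc (0:ℝ) 1)
    (c : ℝ) (hc1 : c ≤ 1) : IsZeroSetD (f ⁻¹' Set.Ici c) := by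
  refine ⟨⟨fun x => max (c - f x) 0, by fun_prop⟩, fun x => ⟨le_max_right _ _, ?_⟩, ?_⟩
  · have h1 := (hf x).1
    exact max_le (by simpa using by linarith) (by norm_num)
  · ext x
    simp [Set.mem_preimage, max_eq_right_iff, sub_nonpos]

lemma aux_coz10 {X : Type*} [TopologicalSpace X] (f : C(X,ℝ))
    (hf : ∀ x, f x ∈ Set.Icc (0:ℝ) 1)
    (c : ℝ) (hc0 : 0 ≤ c) : IsCozSetD (f ⁻¹' Set.Ioi c) := by
  refine ⟨⟨fun x => max (f x - c) 0, by fun_prop⟩, fun x => ⟨le_max_right _ _, ?_⟩, ?_⟩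
  · have h2 := (hf x).2
    exact max_le (by simpa using by linarith) (by norm_num)
  · ext x
    simp [Set.mem_preimage, max_eq_right_iff, sub_nonpos, not_le]

/-- A subset `V` of a space `X` is a cozero-set iff it is U-representable:
`V = ⋃_{n ≥ 1} U n` with `U n ⊆ U (n+1)`, the odd-indexed `U (2n-1)` zero-sets and
the even-indexed `U (2n)` cozero-sets. -/
theorem stmt_10 {X : Type*} [TopologicalSpace X] (V : Set X) :
    IsCozSetD V ↔
      ∃ U : ℕ → Set X, V = (⋃ n, ⋃ (_ : 1 ≤ n), U n) ∧
        (∀ n, 1 ≤ n → U n ⊆ U (n + 1)) ∧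
        (∀ n, 1 ≤ n → IsZeroSetD (U (2 * n - 1))) ∧
        (∀ n, 1 ≤ n → IsCozSetD (U (2 * n))) := by
  constructor
  · rintro ⟨f, hf, rfl⟩
    set t : ℕ → ℝ := fun n => (((n+2)/2 : ℕ) : ℝ)⁻¹ with ht
    have hk1 : ∀ n : ℕ, (1:ℝ) ≤ (((n+2)/2 : ℕ) : ℝ) := by
      intro n; exact_mod_cast Nat.one_le_iff_ne_zero.mpr (by omega)
    have htpos : ∀ n, 0 < t n := fun n => inv_pos.mpr (lt_of_lt_of_le one_pos (hk1 n))
    have ht1 : ∀ n, t n ≤ 1 := fun n => inv_le_one_of_one_le₀ (hk1 n)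
    refine ⟨fun n => if n % 2 = 1 then f ⁻¹' Set.Ici (t n) else f ⁻¹' Set.Ioi (t n),
      ?_, ?_, ?_, ?_⟩
    · ext x
      simp only [Set.mem_compl_iff, Set.mem_preimage, Set.mem_singleton_iff, Set.mem_iUnion]
      constructor
      · intro hx
        have hx0 : 0 < f x := lt_of_le_of_ne (hf x).1 (Ne.symm hx)
        obtain ⟨k, hk⟩ := exists_nat_one_div_lt hx0
        refine ⟨2*k+1, by omega, ?_⟩
        have hodd : (2*k+1) % 2 = 1 := by omega
        rw [if_pos hodd]
        have hkk : (2*k+1+2)/2 = k + 1 := by omega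
        have hteq : t (2*k+1) = ((k:ℝ)+1)⁻¹ := by simp only [ht, hkk]; push_cast; ring
        rw [Set.mem_preimage, hteq]
        rw [one_div] at hk
        exact le_of_lt hk
      · rintro ⟨n, hn, hx⟩
        by_cases h : n % 2 = 1 <;> simp only [h, reduceIte] at hx <;>
        · intro h0
          rw [Set.mem_preimage] at hx
          simp only [Set.mem_Ici, Set.mem_Ioi, h0] at hx
          have := htpos n
          linarith
    · intro n hn x hx
      beta_reduce at hx ⊢
      by_cases h : n % 2 = 1
      · have h2 : (n+1) % 2 = 0 := by omega
        rw [if_pos h] at hx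
        rw [if_neg (by omega)]
        rw [Set.mem_preimage] at hx ⊢
        have hlt : t (n+1) < t n := by
          rw [ht]
          apply inv_strictAnti₀ (lt_of_lt_of_le one_pos (hk1 n))
          have h3 : (n+1+2)/2 = (n+2)/2 + 1 := by omega
          rw [h3]; push_cast; linarith
        exact lt_of_lt_of_le hlt hx
      · rw [if_neg h] at hx
        rw [if_pos (by omega)]
        rw [Set.mem_preimage] at hx ⊢
        have heq : t (n+1) = t n := by
          have h3 : (n+1+2)/2 = (n+2)/2 := by omega
          simp only [ht, h3]
        rw [heq]
        exact Set.mem_Ici.mpr (le_of_lt (Set.mem_Ioi.mp hx))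
    · intro n hn
      have h : (2*n-1) % 2 = 1 := by omega
      beta_reduce
      rw [if_pos h]
      exact aux_zero10 f hf _ (ht1 _)
    · intro n hn
      have h : ¬ (2*n) % 2 = 1 := by omega
      beta_reduce
      rw [if_neg h]
      exact aux_coz10 f hf _ (le_of_lt (htpos _))
  · rintro ⟨U, hV, hmono, -, hcoz⟩
    have chain : ∀ k m, 1 ≤ m → m ≤ k → U m ⊆ U k := by
      intro k
      induction k with
      | zero => intro m h1 h2; omega
      | succ k ih =>
        intro m h1 h2
        rcases Nat.lt_or_ge m (k+1) with h | h
        · exact (ih m h1 (by omega)).trans (hmono k (by omega))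
        · have : m = k + 1 := by omega
          subst this; exact subset_rfl
    choose g hg hgU using fun n : ℕ => hcoz (n+1) (by omega)
    have hV2 : V = ⋃ n : ℕ, U (2 * (n + 1)) := by
      rw [hV]; ext x
      simp only [Set.mem_iUnion]
      constructor
      · rintro ⟨n, hn, hx⟩
        exact ⟨n - 1, chain (2 * (n - 1 + 1)) n hn (by omega) hx⟩
      · rintro ⟨n, hx⟩
        exact ⟨2 * (n + 1), by omega, hx⟩
    set F : X → ℝ := fun x => ∑' n : ℕ, (1/2 : ℝ)^(n+1) * g n x with hF
    have hbound : ∀ n x, ‖(1/2 : ℝ)^(n+1) * g n x‖ ≤ (1/2 : ℝ)^(n+1) := by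
      intro n x
      rw [norm_mul]
      have h1 := (hg n x).1
      have h2 := (hg n x).2
      calc ‖(1/2 : ℝ)^(n+1)‖ * ‖g n x‖ = (1/2:ℝ)^(n+1) * ‖g n x‖ := by
            rw [norm_pow]; norm_num
        _ ≤ (1/2:ℝ)^(n+1) * 1 := by
            apply mul_le_mul_of_nonneg_left _ (by positivity)
            rw [Real.norm_eq_abs, abs_le]; constructor <;> linarith
        _ = (1/2:ℝ)^(n+1) := mul_one _
    have hsumgeo : Summable (fun n : ℕ => (1/2 : ℝ)^(n+1)) := by
      apply Summable.comp_injective (summable_geometric_of_lt_one (by norm_num) (by norm_num))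
        (add_left_injective 1)
    have hsum : ∀ x, Summable (fun n : ℕ => (1/2 : ℝ)^(n+1) * g n x) := by
      intro x
      exact hsumgeo.of_norm_bounded (fun n => hbound n x)
    have hcont : Continuous F := by
      apply continuous_tsum _ hsumgeo hbound
      intro n
      exact Continuous.mul continuous_const (g n).continuous
    have hnonneg : ∀ n x, 0 ≤ (1/2 : ℝ)^(n+1) * g n x := by
      intro n x
      exact mul_nonneg (by positivity) (hg n x).1
    have hgeosum : ∑' n : ℕ, (1/2 : ℝ)^(n+1) = 1 := by
      have h4 : ∀ n : ℕ, (1/2 : ℝ)^(n+1) = (1/2) * (1/2)^n := fun n => by ring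
      rw [tsum_congr h4, tsum_mul_left, tsum_geometric_two]
      norm_num
    have hF01 : ∀ x, F x ∈ Set.Icc (0:ℝ) 1 := by
      intro x
      constructor
      · exact tsum_nonneg (fun n => hnonneg n x)
      · rw [← hgeosum]
        apply Summable.tsum_le_tsum _ (hsum x) hsumgeo
        intro n
        calc (1/2 : ℝ)^(n+1) * g n x ≤ (1/2:ℝ)^(n+1) * 1 :=
              mul_le_mul_of_nonneg_left (hg n x).2 (by positivity)
          _ = _ := mul_one _
    have hFzero : ∀ x, F x = 0 ↔ ∀ n, g n x = 0 := by
      intro x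
      constructor
      · intro h0 n
        have hle := Summable.le_tsum (hsum x) n (fun m _ => hnonneg m x)
        replace hle : (1/2 : ℝ)^(n+1) * g n x ≤ 0 := hle.trans_eq h0
        have hge := hnonneg n x
        have hz : (1/2 : ℝ)^(n+1) * g n x = 0 := le_antisymm hle hge
        have hne : (1/2 : ℝ)^(n+1) ≠ 0 := by positivity
        exact (mul_eq_zero.mp hz).resolve_left hne
      · intro h
        rw [hF]
        simp only [h, mul_zero, tsum_zero]
    refine ⟨⟨F, hcont⟩, hF01, ?_⟩
    rw [hV2]
    ext x
    simp only [Set.mem_iUnion, Set.mem_compl_iff, Set.mem_preimage, Set.mem_singleton_iff,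
      ContinuousMap.coe_mk]
    rw [hFzero x]
    push_neg
    constructor
    · rintro ⟨n, hx⟩
      refine ⟨n, ?_⟩
      intro hzero
      have h5 := hgU n
      rw [h5] at hx
      simp [hzero] at hx
    · rintro ⟨n, hn⟩
      refine ⟨n, ?_⟩
      rw [hgU n]
      simp [hn]
end

section
/- Let X be a compact subspace of Σ*([0,1], Γ) = {x ∈ [0,1]^Γ : for every ε > 0, the set {γ : x(γ) ≥ ε} is finite}. For r ∈ (0,1) and γ ∈ Γ, let V_{r,γ} = {x ∈ X : x(γ) > r}. Then for each fixed r, the family {V_{r,γ} : γ ∈ Γ} is strongly point-finite, i.e., any infinite subfamily contains a finite subfamily with empty intersection. -/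
/-- Let `X` be a compact subspace of `Σ*([0,1], Γ)`, the set of points `x` of the cube
`[0,1]^Γ` such that `{γ | ε ≤ x γ}` is finite for every `ε > 0`. For fixed `r ∈ (0,1)`,
the family `{V_{r,γ} : γ ∈ Γ}`, where `V_{r,γ} = {x ∈ X | x γ > r}`, is strongly
point-finite: every infinite subfamily contains a finite subfamily with empty
intersection. -/
theorem stmt_11 {Γ : Type*} (X : Set (Γ → ℝ)) (hX : IsCompact X)
    (hsub : ∀ x ∈ X, (∀ γ, x γ ∈ Set.Icc (0 : ℝ) 1) ∧
      ∀ ε : ℝ, 0 < ε → {γ | ε ≤ x γ}.Finite)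
    (r : ℝ) (hr : r ∈ Set.Ioo (0 : ℝ) 1) :
    ∀ μ ⊆ {S : Set (Γ → ℝ) | ∃ γ : Γ, S = {x ∈ X | r < x γ}},
      μ.Infinite → ∃ μ' ⊆ μ, μ'.Finite ∧ ⋂₀ μ' = ∅ := by
  intro μ hμ hinf
  by_contra h
  push_neg at h
  -- h : every finite subfamily of μ has nonempty intersection
  set f := hinf.natEmbedding with hf
  have hγ : ∀ n : ℕ, ∃ γ : Γ, (f n : Set (Γ → ℝ)) = {x ∈ X | r < x γ} :=
    fun n => hμ (f n).2
  choose γ hγ using hγ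
  have hγinj : Function.Injective γ := by
    intro n m hnm
    apply f.injective
    ext1
    rw [hγ n, hγ m, hnm]
  have key : (X ∩ ⋂ n, {x : Γ → ℝ | r ≤ x (γ n)}).Nonempty := by
    apply hX.inter_iInter_nonempty
    · intro n
      exact isClosed_le continuous_const (continuous_apply _)
    · intro u
      set μ' : Set (Set (Γ → ℝ)) := (fun n => (f n : Set (Γ → ℝ))) '' (insert 0 ↑u) with hμ'
      have hsubμ : μ' ⊆ μ := by
        rintro S ⟨n, -, rfl⟩
        exact (f n).2
      have hfin : μ'.Finite := (u.finite_toSet.insert 0).image _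
      obtain ⟨x, hx⟩ := h μ' hsubμ hfin
      have hx' : ∀ n ∈ insert 0 (↑u : Set ℕ), x ∈ X ∧ r < x (γ n) := by
        intro n hn
        have := hx _ ⟨n, hn, rfl⟩
        simp only [hγ n] at this
        exact this
      refine ⟨x, (hx' 0 (Set.mem_insert _ _)).1, ?_⟩
      simp only [Set.mem_iInter₂]
      intro n hn
      exact le_of_lt (hx' n (Set.mem_insert_of_mem _ hn)).2
  obtain ⟨x, hxX, hxall⟩ := key
  have hfin : {γ | r ≤ x γ}.Finite := (hsub x hxX).2 r hr.1
  have hrange : Set.range γ ⊆ {γ | r ≤ x γ} := by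
    rintro _ ⟨n, rfl⟩
    have := Set.mem_iInter.1 hxall n
    exact this
  exact (Set.infinite_range_of_injective hγinj) (hfin.subset hrange)
end

section
/- Let X be a compact subspace of Σ([0,1], Γ) = {x ∈ [0,1]^Γ : {γ : x(γ) > 0} is countable}. For rational r ∈ (0,1) and γ ∈ Γ, let V_{r,γ} = {x ∈ X : x(γ) > r}. Then the family α = {V_{r,γ} : γ ∈ Γ, r ∈ ℚ ∩ (0,1)} is strongly point-countable: every ℵ₁-sized subfamily of distinct nonempty members contains a finite subfamily with empty intersection. -/
/-- Let `X` be a compact subspace of `Σ([0,1], Γ)`, the set of points of `[0,1]^Γ`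
with countable support. The family `α = {V_{r,γ} : γ ∈ Γ, r ∈ ℚ ∩ (0,1)}`, where
`V_{r,γ} = {x ∈ X | x γ > r}`, is strongly point-countable: every subfamily of
cardinality `ℵ₁` consisting of nonempty sets contains a finite subfamily with
empty intersection. -/
theorem stmt_12 {Γ : Type*} (X : Set (Γ → ℝ)) (hX : IsCompact X)
    (hsub : ∀ x ∈ X, (∀ γ, x γ ∈ Set.Icc (0 : ℝ) 1) ∧ {γ | 0 < x γ}.Countable) :
    ∀ μ ⊆ {S : Set (Γ → ℝ) | ∃ γ : Γ, ∃ r : ℚ, 0 < r ∧ (r : ℝ) < 1 ∧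
        S = {x ∈ X | (r : ℝ) < x γ}},
      Cardinal.mk μ = Cardinal.aleph 1 → (∀ S ∈ μ, S.Nonempty) →
        ∃ μ' ⊆ μ, μ'.Finite ∧ ⋂₀ μ' = ∅ := by
  intro μ hμsub hμcard hμne
  by_contra hcon
  push_neg at hcon
  -- choose representations
  have hrep := fun S : μ => hμsub S.2
  choose γ r hr0 hr1 hSeq using hrep
  -- μ is nonempty
  have hμne' : μ.Nonempty := by
    rw [← Set.nonempty_coe_sort, ← Cardinal.mk_ne_zero_iff, hμcard]
    exact (lt_of_le_of_lt zero_le Cardinal.aleph0_lt_aleph_one).ne'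
  -- closed sets
  set Z : μ → Set (Γ → ℝ) := fun S => {x | (r S : ℝ) ≤ x (γ S)} with hZ
  have hZc : ∀ S, IsClosed (Z S) := fun S =>
    isClosed_le continuous_const (continuous_apply (γ S))
  -- finite intersection property gives nonempty total intersection
  have hinter : (X ∩ ⋂ S, Z S).Nonempty := by
    rw [Set.nonempty_iff_ne_empty]
    intro hemp
    obtain ⟨t, ht⟩ := hX.elim_finite_subfamily_closed Z hZc hemp
    set μ' : Set (Set (Γ → ℝ)) := (fun S : μ => (S : Set (Γ → ℝ))) '' ↑t with hμ'
    have hsub' : μ' ⊆ μ := by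
      rintro s ⟨S, _, rfl⟩; exact S.2
    have hfin : μ'.Finite := t.finite_toSet.image _
    obtain ⟨x, hx⟩ := hcon μ' hsub' hfin
    have hxmem : ∀ S ∈ t, x ∈ (S : Set (Γ → ℝ)) := by
      intro S hS
      exact hx _ ⟨S, hS, rfl⟩
    have hxX : x ∈ X := by
      rcases t.eq_empty_or_nonempty with hte | ⟨S, hS⟩
      · -- t empty: X ∩ univ = ∅, so X = ∅, contradicting nonemptiness of members
        exfalso
        obtain ⟨S, hS⟩ := hμne'
        obtain ⟨y, hy⟩ := hμne S hS
        have hyX : y ∈ X := by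
          have hy' : y ∈ {x | x ∈ X ∧ (↑(r ⟨S, hS⟩) : ℝ) < x (γ ⟨S, hS⟩)} := by
            rw [← hSeq ⟨S, hS⟩]; exact hy
          exact hy'.1
        have : X = ∅ := by
          simpa [hte] using ht
        simp [this] at hyX
      · have := hxmem S hS
        rw [hSeq S] at this
        exact this.1
    have hxZ : x ∈ X ∩ ⋂ S ∈ t, Z S := by
      refine ⟨hxX, ?_⟩
      simp only [Set.mem_iInter]
      intro S hS
      have := hxmem S hS
      rw [hSeq S] at this
      exact le_of_lt this.2
    rw [ht] at hxZ
    exact hxZ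
  obtain ⟨x, hxX, hxZ⟩ := hinter
  simp only [Set.mem_iInter] at hxZ
  -- every γ S is in the support of x
  have hsup : ∀ S : μ, γ S ∈ {g | 0 < x g} := by
    intro S
    have h1 : (0 : ℝ) < (r S : ℝ) := by exact_mod_cast hr0 S
    exact lt_of_lt_of_le h1 (hxZ S)
  have hcount : {g : Γ | 0 < x g}.Countable := (hsub x hxX).2
  haveI : Countable ↥{g : Γ | 0 < x g} := hcount.to_subtype
  -- inject μ into support × ℚ
  let f : μ → ↥{g : Γ | 0 < x g} × ℚ := fun S => (⟨γ S, hsup S⟩, r S)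
  have hf : Function.Injective f := by
    intro S S' h
    simp only [f, Prod.mk.injEq, Subtype.mk.injEq] at h
    apply Subtype.ext
    rw [hSeq S, hSeq S', h.1, h.2]
  haveI : Countable ↥μ := Function.Injective.countable hf
  have : Cardinal.mk ↥μ ≤ Cardinal.aleph0 := Cardinal.mk_le_aleph0
  rw [hμcard] at this
  exact absurd this (not_le.mpr Cardinal.aleph0_lt_aleph_one)
end

section
/- Let X be compact Hausdorff and α a T₀-separating family of cozero-subsets of X. Suppose for every U ∈ α a family α_U = {U_i : i ∈ ℕ} of cozero-sets is given with U = ⋃_i U_i and U_i ⊆ cl(U_i) ⊆ U_{i+1} for every i. Then α* = ⋃_{U ∈ α} α_U is an F-separating family of cozero-subsets of X: whenever x ≠ y in X, there is W ∈ α* with x ∈ W and y ∉ cl(W), or vice versa. -/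
/-- Let `X` be compact Hausdorff and `α` a `T₀`-separating family of cozero-sets.
Suppose for every `U ∈ α` a sequence `g U : ℕ → Set X` of cozero-sets is given with
`U = ⋃ i, g U i` and `g U i ⊆ cl (g U i) ⊆ g U (i+1)`. Then
`α* = {g U i : U ∈ α, i ∈ ℕ}` is an F-separating family of cozero-sets of `X`. -/
theorem stmt_13 {X : Type*} [TopologicalSpace X] [CompactSpace X] [T2Space X]
    (α : Set (Set X)) (hcoz : ∀ U ∈ α, IsCozSetD U)
    (hT0 : ∀ x y : X, x ≠ y → ∃ U ∈ α, (x ∈ U ∧ y ∉ U) ∨ (y ∈ U ∧ x ∉ U))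
    (g : Set X → ℕ → Set X)
    (hgcoz : ∀ U ∈ α, ∀ i : ℕ, IsCozSetD (g U i))
    (hgU : ∀ U ∈ α, U = ⋃ i, g U i)
    (hgincl : ∀ U ∈ α, ∀ i : ℕ, closure (g U i) ⊆ g U (i + 1)) :
    (∀ W ∈ {W | ∃ U ∈ α, ∃ i : ℕ, W = g U i}, IsCozSetD W) ∧
      ∀ x y : X, x ≠ y → ∃ W ∈ {W | ∃ U ∈ α, ∃ i : ℕ, W = g U i},
        (x ∈ W ∧ y ∉ closure W) ∨ (y ∈ W ∧ x ∉ closure W) := by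
  constructor
  · rintro W ⟨U, hU, i, rfl⟩
    exact hgcoz U hU i
  · intro x y hxy
    obtain ⟨U, hU, h⟩ := hT0 x y hxy
    have hsub : ∀ i, g U i ⊆ U := fun i => le_of_le_of_eq (Set.subset_iUnion _ i) (hgU U hU).symm
    rcases h with ⟨hx, hy⟩ | ⟨hy, hx⟩
    · have : x ∈ ⋃ i, g U i := by rw [← hgU U hU]; exact hx
      obtain ⟨i, hi⟩ := Set.mem_iUnion.mp this
      refine ⟨g U i, ⟨U, hU, i, rfl⟩, Or.inl ⟨hi, fun hc => hy (hsub _ (hgincl U hU i hc))⟩⟩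
    · have : y ∈ ⋃ i, g U i := by rw [← hgU U hU]; exact hy
      obtain ⟨i, hi⟩ := Set.mem_iUnion.mp this
      refine ⟨g U i, ⟨U, hU, i, rfl⟩, Or.inr ⟨hi, fun hc => hx (hsub _ (hgincl U hU i hc))⟩⟩
end

section
/- If Y is a metrizable topological space, then the complete Boolean algebra RC(Y) of regular closed subsets of Y has a σ-disjointed dense subset: taking a σ-discrete base B = ⋃_i B_i of Y, the family {cl(U) : U ∈ B_i}, i ∈ ℕ, is a σ-disjointed dense subset of RC(Y). -/
/-- For a metrizable space `Y` with a σ-discrete base `B = ⋃ i, B i`, the family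
`{cl U : U ∈ B i}`, `i ∈ ℕ`, is a σ-disjointed dense subset of the Boolean algebra
`RC(Y)` of regular closed sets: its members are regular closed, distinct members at
each level have meet `0` (i.e. `int (cl U ∩ cl V) = ∅`), and every nonempty regular
closed set contains a nonempty member. -/
theorem stmt_17 {Y : Type*} [TopologicalSpace Y] [TopologicalSpace.MetrizableSpace Y]
    (B : ℕ → Set (Set Y))
    (hopen : ∀ i, ∀ U ∈ B i, IsOpen U)
    (hdisc : ∀ i, ∀ y : Y, ∃ W ∈ nhds y, {U | U ∈ B i ∧ (U ∩ W).Nonempty}.Subsingleton)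
    (hbase : ∀ W : Set Y, IsOpen W → ∀ y ∈ W, ∃ i, ∃ U ∈ B i, y ∈ U ∧ U ⊆ W) :
    (∀ i, ∀ U ∈ B i, closure U = closure (interior (closure U))) ∧
      (∀ i, ∀ U ∈ B i, ∀ V ∈ B i, closure U ≠ closure V →
        interior (closure U ∩ closure V) = ∅) ∧
      ∀ F : Set Y, F = closure (interior F) → F.Nonempty →
        ∃ i, ∃ U ∈ B i, (closure U).Nonempty ∧ closure U ⊆ F := by
  refine ⟨?_, ?_, ?_⟩
  · intro i U hU
    apply le_antisymm
    · exact closure_mono ((hopen i U hU).subset_interior_closure)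
    · exact closure_minimal interior_subset isClosed_closure
  · intro i U hU V hV hne
    have hUV : U ≠ V := fun h => hne (by rw [h])
    have : closure U ∩ closure V = ∅ := by
      by_contra h
      obtain ⟨y, hyU, hyV⟩ := Set.nonempty_iff_ne_empty.2 h
      obtain ⟨W, hW, hsub⟩ := hdisc i y
      have h1 : (U ∩ W).Nonempty := by
        obtain ⟨z, hz⟩ := mem_closure_iff_nhds.1 hyU W hW
        exact ⟨z, hz.2, hz.1⟩
      have h2 : (V ∩ W).Nonempty := by
        obtain ⟨z, hz⟩ := mem_closure_iff_nhds.1 hyV W hW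
        exact ⟨z, hz.2, hz.1⟩
      exact hUV (hsub ⟨hU, h1⟩ ⟨hV, h2⟩)
    rw [this, interior_empty]
  · intro F hF hFne
    have hint : (interior F).Nonempty := by
      rcases (interior F).eq_empty_or_nonempty with h | h
      · rw [hF, h, closure_empty] at hFne
        exact absurd hFne Set.not_nonempty_empty
      · exact h
    obtain ⟨y, hy⟩ := hint
    obtain ⟨i, U, hU, hyU, hsub⟩ := hbase (interior F) isOpen_interior y hy
    refine ⟨i, U, hU, ⟨y, subset_closure hyU⟩, ?_⟩
    calc closure U ⊆ closure (interior F) := closure_mono hsub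
      _ = F := hF.symm
end
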